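/- arXiv:2503.21478 — 3 statements merged into one kernel-verified Lean document; each statement's English description precedes it below -/
import Mathlib

section
/- Let A ≥ 1 and let P : ℝ² → ℝ² be the linear map with P(u) = A·u and P(v) = v for an orthonormal basis (u,v) of ℝ². Then for every nonzero x ∈ ℝ², the inner product ⟨x, P(x)⟩ is positive and ⟨x, P(x)⟩/(‖x‖·‖P(x)‖) ≥ 2√A/(A+1). -/
set_option maxHeartbeats 800000


/-- If `P` has eigenvalues `A ≥ 1` and `1` w.r.t. an orthonormal basis of `ℝ²`, then
for every nonzero `x`, `⟨x, P x⟩ > 0` and `⟨x, P x⟩/(‖x‖·‖P x‖) ≥ 2√A/(A+1)`. -/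
theorem stmt6 (A : ℝ) (hA : 1 ≤ A)
    (u v : EuclideanSpace ℝ (Fin 2)) (hu : ‖u‖ = 1) (hv : ‖v‖ = 1)
    (huv : inner ℝ u v = (0 : ℝ))
    (P : EuclideanSpace ℝ (Fin 2) →ₗ[ℝ] EuclideanSpace ℝ (Fin 2))
    (hPu : P u = A • u) (hPv : P v = v)
    (x : EuclideanSpace ℝ (Fin 2)) (hx : x ≠ 0) :
    0 < (inner ℝ x (P x) : ℝ) ∧
      2 * Real.sqrt A / (A + 1) ≤ (inner ℝ x (P x) : ℝ) / (‖x‖ * ‖P x‖) := by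
  have hvu : (inner ℝ v u : ℝ) = 0 := by rw [real_inner_comm]; exact huv
  have huu : (inner ℝ u u : ℝ) = 1 := by
    rw [real_inner_self_eq_norm_sq, hu]; norm_num
  have hvv : (inner ℝ v v : ℝ) = 1 := by
    rw [real_inner_self_eq_norm_sq, hv]; norm_num
  -- orthonormal family
  have hon : Orthonormal ℝ ![u, v] := by
    rw [orthonormal_iff_ite]
    intro i j
    fin_cases i <;> fin_cases j <;> simp_all
  have hcard : Fintype.card (Fin 2) = Module.finrank ℝ (EuclideanSpace ℝ (Fin 2)) := by
    simp [finrank_euclideanSpace]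
  set B := basisOfOrthonormalOfCardEqFinrank hon hcard with hB
  have hBc : (B : Fin 2 → EuclideanSpace ℝ (Fin 2)) = ![u, v] :=
    coe_basisOfOrthonormalOfCardEqFinrank hon hcard
  set a : ℝ := inner ℝ u x with ha
  set b : ℝ := inner ℝ v x with hb
  have hxab : x = a • u + b • v := by
    obtain ⟨c, d, hcd⟩ : ∃ c d : ℝ, x = c • u + d • v := by
      refine ⟨B.repr x 0, B.repr x 1, ?_⟩
      have hsum := B.sum_repr x
      rw [Fin.sum_univ_two] at hsum
      have h0 : B 0 = u := by rw [hBc]; rfl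
      have h1 : B 1 = v := by rw [hBc]; rfl
      rw [h0, h1] at hsum
      exact hsum.symm
    have hac : a = c := by
      rw [ha, hcd]
      simp only [inner_add_right, real_inner_smul_right, huu, huv]
      ring
    have hbd : b = d := by
      rw [hb, hcd]
      simp only [inner_add_right, real_inner_smul_right, hvv, hvu]
      ring
    rw [hac, hbd, hcd]
  have hPxab : P x = (A * a) • u + b • v := by
    rw [hxab, map_add, map_smul, map_smul, hPu, hPv, smul_smul, mul_comm a A]
  have hinner : (inner ℝ x (P x) : ℝ) = A * a ^ 2 + b ^ 2 := by
    rw [hPxab]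
    nth_rewrite 1 [hxab]
    simp only [inner_add_left, inner_add_right, real_inner_smul_left, real_inner_smul_right,
      huu, hvv, huv, hvu]
    ring
  have hnx : ‖x‖ ^ 2 = a ^ 2 + b ^ 2 := by
    rw [← real_inner_self_eq_norm_sq, hxab]
    simp only [inner_add_left, inner_add_right, real_inner_smul_left, real_inner_smul_right,
      huu, hvv, huv, hvu]
    ring
  have hnPx : ‖P x‖ ^ 2 = A ^ 2 * a ^ 2 + b ^ 2 := by
    rw [← real_inner_self_eq_norm_sq, hPxab]
    simp only [inner_add_left, inner_add_right, real_inner_smul_left, real_inner_smul_right,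
      huu, hvv, huv, hvu]
    ring
  have hab : a ^ 2 + b ^ 2 ≠ 0 := by
    intro h
    apply hx
    rw [← hnx] at h
    simpa using pow_eq_zero_iff (n := 2) (by norm_num) |>.mp h
  have hab' : 0 < a ^ 2 + b ^ 2 :=
    lt_of_le_of_ne (by positivity) (Ne.symm hab)
  have hA0 : (0:ℝ) < A := lt_of_lt_of_le one_pos hA
  have hN : 0 < A * a ^ 2 + b ^ 2 := by nlinarith [sq_nonneg a, sq_nonneg b]
  refine ⟨by rw [hinner]; exact hN, ?_⟩
  have hnx0 : 0 < ‖x‖ := norm_pos_iff.mpr hx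
  have hnPx0 : 0 < ‖P x‖ := by
    have h1 : a ^ 2 + b ^ 2 ≤ A ^ 2 * a ^ 2 + b ^ 2 := by nlinarith [mul_nonneg (mul_nonneg (sub_nonneg.mpr hA) (by linarith : (0:ℝ) ≤ A + 1)) (sq_nonneg a)]
    have : (0:ℝ) < ‖P x‖ ^ 2 := by rw [hnPx]; linarith
    nlinarith [norm_nonneg (P x)]
  rw [hinner, div_le_div_iff₀ (by linarith) (by positivity)]
  have hsA : Real.sqrt A ^ 2 = A := Real.sq_sqrt hA0.le
  have hsA0 : 0 ≤ Real.sqrt A := Real.sqrt_nonneg A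
  have hL0 : 0 ≤ 2 * Real.sqrt A * (‖x‖ * ‖P x‖) := by positivity
  have hR0 : 0 ≤ (A * a ^ 2 + b ^ 2) * (A + 1) := by positivity
  have hL2 : (2 * Real.sqrt A * (‖x‖ * ‖P x‖)) ^ 2
      = 4 * A * ((a ^ 2 + b ^ 2) * (A ^ 2 * a ^ 2 + b ^ 2)) := by
    rw [mul_pow, mul_pow, mul_pow, hsA, hnx, hnPx]; ring
  have hkey : (2 * Real.sqrt A * (‖x‖ * ‖P x‖)) ^ 2 ≤ ((A * a ^ 2 + b ^ 2) * (A + 1)) ^ 2 := by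
    rw [hL2]; nlinarith [sq_nonneg ((A - 1) * (A * a ^ 2 - b ^ 2))]
  exact (pow_le_pow_iff_left₀ hL0 hR0 two_ne_zero).mp hkey
end

section
/- Let A be a real number with 1 ≤ A < d⁴ where d = 1/cos(π/(4N)) for a positive integer N, and let P : ℝ² → ℝ² be the positive definite linear map with eigenvalues A and 1 with respect to an orthonormal eigenbasis. Then for every nonzero x ∈ ℝ², the angle between x and P(x) is at most π/(2N). -/
private lemma stmt7_scalar (c A : ℝ) (hc0 : 0 < c) (hc1 : c ≤ 1) (hC : 0 ≤ 2*c^2 - 1)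
    (hA : 1 ≤ A) (hAc : A * c^4 ≤ 1) :
    (2*c^2-1)^2 * (A+1)^2 ≤ 4*A := by
  have hc2 : (0:ℝ) ≤ 1 - c^2 := by nlinarith
  have h12 : (0:ℝ) ≤ 12*c^6+3*c^2-1 := by nlinarith [pow_pos hc0 6]
  have hkey : c^4 * (4*A - (2*c^2-1)^2*(A+1)^2) = (2*c^2-1)^2*((A-1)*(1-A*c^4)) + (A-1)*((1-c^2)*(12*c^6+3*c^2-1)) + 16*c^6*(1-c^2) := by ring
  have h1 : (0:ℝ) ≤ (2*c^2-1)^2*((A-1)*(1-A*c^4)) :=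
    mul_nonneg (sq_nonneg _) (mul_nonneg (by linarith) (by linarith))
  have h2 : (0:ℝ) ≤ (A-1)*((1-c^2)*(12*c^6+3*c^2-1)) :=
    mul_nonneg (by linarith) (mul_nonneg hc2 h12)
  have h3 : (0:ℝ) ≤ 16*c^6*(1-c^2) := mul_nonneg (by positivity) hc2
  have hc4 : (0:ℝ) < c^4 := by positivity
  nlinarith [mul_pos hc4 hc4]

private lemma stmt7_quad (c A t s : ℝ) (hc0 : 0 < c) (hc1 : c ≤ 1) (hC : 0 ≤ 2*c^2 - 1)
    (hA : 1 ≤ A) (hAc : A * c^4 ≤ 1) (ht : 0 ≤ t) (hs : 0 ≤ s) :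
    (2*c^2-1)^2 * ((t+s)*(A^2*t+s)) ≤ (A*t+s)^2 := by
  have hscalar := stmt7_scalar c A hc0 hc1 hC hA hAc
  have hC1 : 2*c^2-1 ≤ 1 := by nlinarith
  have h1 : (0:ℝ) ≤ (1-(2*c^2-1)^2) * (A*t-s)^2 :=
    mul_nonneg (by nlinarith) (sq_nonneg _)
  have h2 : (0:ℝ) ≤ t*s*(4*A - (2*c^2-1)^2*(A+1)^2) :=
    mul_nonneg (mul_nonneg ht hs) (by linarith)
  nlinarith [h1, h2]

set_option maxHeartbeats 1000000 in
/-- If `1 ≤ A < d⁴` with `d = 1/cos(π/(4N))` and `P` is the positive definite map with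
eigenvalues `A`, `1` w.r.t. an orthonormal basis of `ℝ²`, then `P` rotates every
nonzero vector by an angle of at most `π/(2N)`. -/
theorem stmt7 (N : ℕ) (hN : 1 ≤ N) (A d : ℝ)
    (hd : d = 1 / Real.cos (Real.pi / (4 * N)))
    (hA1 : 1 ≤ A) (hA2 : A < d ^ 4)
    (u v : EuclideanSpace ℝ (Fin 2)) (hu : ‖u‖ = 1) (hv : ‖v‖ = 1)
    (huv : inner ℝ u v = (0 : ℝ))
    (P : EuclideanSpace ℝ (Fin 2) →ₗ[ℝ] EuclideanSpace ℝ (Fin 2))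
    (hPu : P u = A • u) (hPv : P v = v)
    (x : EuclideanSpace ℝ (Fin 2)) (hx : x ≠ 0) :
    Real.arccos ((inner ℝ x (P x) : ℝ) / (‖x‖ * ‖P x‖)) ≤ Real.pi / (2 * N) := by
  set c := Real.cos (Real.pi / (4 * N)) with hc_def
  have hNR : (1:ℝ) ≤ (N:ℝ) := by exact_mod_cast hN
  have hN0 : (0:ℝ) < (N:ℝ) := by linarith
  -- basic bounds on the angle π/(4N)
  have hα_pos : 0 < Real.pi / (4 * N) := by positivity
  have hα_le : Real.pi / (4 * N) ≤ Real.pi / 4 := by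
    apply div_le_div_of_nonneg_left Real.pi_pos.le (by norm_num) (by linarith)
  have hα_lt : Real.pi / (4 * N) < Real.pi / 2 := by
    have hpi := Real.pi_pos
    linarith
  have hc0 : 0 < c := Real.cos_pos_of_mem_Ioo ⟨by linarith [Real.pi_pos], hα_lt⟩
  have hc1 : c ≤ 1 := Real.cos_le_one _
  -- π/(2N) = 2 * (π/(4N))
  have h2N : Real.pi / (2 * N) = 2 * (Real.pi / (4 * N)) := by
    field_simp; ring
  have hCeq : Real.cos (Real.pi / (2 * N)) = 2 * c ^ 2 - 1 := by
    rw [h2N, Real.cos_two_mul]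
  have h2N_nonneg : 0 ≤ Real.pi / (2 * N) := by positivity
  have h2N_le_half : Real.pi / (2 * N) ≤ Real.pi / 2 := by
    rw [div_le_div_iff₀ (by positivity) (by norm_num)]
    nlinarith [Real.pi_pos]
  have h2N_le_pi : Real.pi / (2 * N) ≤ Real.pi := by
    linarith [Real.pi_pos]
  have hCnn : 0 ≤ 2 * c ^ 2 - 1 := by
    rw [← hCeq]
    exact Real.cos_nonneg_of_mem_Icc ⟨by linarith [Real.pi_pos], h2N_le_half⟩
  have hAc : A * c ^ 4 ≤ 1 := by
    rw [hd, div_pow, one_pow] at hA2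
    have hc4 : (0:ℝ) < c ^ 4 := by positivity
    exact ((lt_div_iff₀ hc4).mp hA2).le
  -- decompose x in the orthonormal basis
  have huu : (inner ℝ u u : ℝ) = 1 := by
    rw [real_inner_self_eq_norm_sq, hu]; norm_num
  have hvv : (inner ℝ v v : ℝ) = 1 := by
    rw [real_inner_self_eq_norm_sq, hv]; norm_num
  have hvu : (inner ℝ v u : ℝ) = 0 := by rw [real_inner_comm]; exact huv
  obtain ⟨a, b, hxab⟩ : ∃ a b : ℝ, x = a • u + b • v := by
    have hon : Orthonormal ℝ ![u, v] := by
      rw [orthonormal_iff_ite]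
      intro i j
      fin_cases i <;> fin_cases j <;> simp [huu, hvv, huv, hvu, hu, hv]
    have hcard : Fintype.card (Fin 2) = Module.finrank ℝ (EuclideanSpace ℝ (Fin 2)) := by
      simp
    let B := basisOfLinearIndependentOfCardEqFinrank hon.linearIndependent hcard
    have hbx := B.sum_repr x
    rw [Fin.sum_univ_two] at hbx
    have hB : ⇑B = ![u, v] := coe_basisOfLinearIndependentOfCardEqFinrank _ _
    have h0 : B 0 = u := by rw [hB]; rfl
    have h1 : B 1 = v := by rw [hB]; rfl
    rw [h0, h1] at hbx
    exact ⟨_, _, hbx.symm⟩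
  -- inner products of combinations
  have inner_comb : ∀ p q r s : ℝ,
      (inner ℝ (p • u + q • v) (r • u + s • v) : ℝ) = p * r + q * s := by
    intro p q r s
    simp only [inner_add_left, inner_add_right, real_inner_smul_left, real_inner_smul_right,
      huu, hvv, huv, hvu]
    ring
  have hPx : P x = (A * a) • u + b • v := by
    rw [hxab, map_add, map_smul, map_smul, hPu, hPv, smul_smul, mul_comm]
  have hinner : (inner ℝ x (P x) : ℝ) = A * a ^ 2 + b ^ 2 := by
    rw [hPx, hxab, inner_comb]; ring
  have hnx : ‖x‖ ^ 2 = a ^ 2 + b ^ 2 := by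
    rw [← real_inner_self_eq_norm_sq, hxab, inner_comb]; ring
  have hnPx : ‖P x‖ ^ 2 = A ^ 2 * a ^ 2 + b ^ 2 := by
    rw [← real_inner_self_eq_norm_sq, hPx, inner_comb]; ring
  have hab : 0 < a ^ 2 + b ^ 2 := by
    rw [← hnx]
    have : ‖x‖ ≠ 0 := norm_ne_zero_iff.mpr hx
    positivity
  have hS : 0 < A * a ^ 2 + b ^ 2 := by nlinarith [sq_nonneg a, sq_nonneg b]
  have hAsq : 1 ≤ A ^ 2 := by nlinarith
  have hPxn : 0 < A ^ 2 * a ^ 2 + b ^ 2 := by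
    nlinarith [mul_le_mul_of_nonneg_right hAsq (sq_nonneg a)]
  have hxpos : 0 < ‖x‖ := norm_pos_iff.mpr hx
  have hPxpos : 0 < ‖P x‖ := by
    nlinarith [norm_nonneg (P x), hnPx, hPxn]
  -- the core bound: cos(π/(2N)) * (‖x‖ * ‖P x‖) ≤ ⟪x, P x⟫
  have hquad := stmt7_quad c A (a ^ 2) (b ^ 2) hc0 hc1 hCnn hA1 hAc (sq_nonneg a) (sq_nonneg b)
  have hW : 0 ≤ (2 * c ^ 2 - 1) * (‖x‖ * ‖P x‖) :=
    mul_nonneg hCnn (by positivity)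
  have hsq : ((2 * c ^ 2 - 1) * (‖x‖ * ‖P x‖)) ^ 2 ≤ (A * a ^ 2 + b ^ 2) ^ 2 := by
    have : ((2 * c ^ 2 - 1) * (‖x‖ * ‖P x‖)) ^ 2
        = (2 * c ^ 2 - 1) ^ 2 * ((a ^ 2 + b ^ 2) * (A ^ 2 * a ^ 2 + b ^ 2)) := by
      rw [mul_pow, mul_pow, hnx, hnPx]
    rw [this]
    exact hquad
  have hcore : (2 * c ^ 2 - 1) * (‖x‖ * ‖P x‖) ≤ A * a ^ 2 + b ^ 2 := by
    nlinarith [hW, hS, hsq]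
  -- conclude via arccos monotonicity
  have hratio : Real.cos (Real.pi / (2 * N)) ≤ (inner ℝ x (P x) : ℝ) / (‖x‖ * ‖P x‖) := by
    rw [hCeq, hinner, le_div_iff₀ (by positivity)]
    exact hcore
  set r : ℝ := (inner ℝ x (P x) : ℝ) / (‖x‖ * ‖P x‖) with hr_def
  have habs : |(inner ℝ x (P x) : ℝ)| ≤ ‖x‖ * ‖P x‖ := abs_real_inner_le_norm x (P x)
  have hW0 : 0 < ‖x‖ * ‖P x‖ := by positivity
  have hr1 : r ≤ 1 := by
    rw [hr_def, div_le_one hW0]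
    exact (le_abs_self _).trans habs
  have hrm1 : -1 ≤ r := by
    rw [hr_def, le_div_iff₀ hW0]
    have := (abs_le.mp habs).1
    linarith
  have hcr : Real.cos (Real.arccos r) = r := Real.cos_arccos hrm1 hr1
  by_contra hcon
  push_neg at hcon
  have hlt := Real.strictAntiOn_cos ⟨h2N_nonneg, h2N_le_pi⟩
    ⟨Real.arccos_nonneg r, Real.arccos_le_pi r⟩ hcon
  rw [hcr] at hlt
  exact absurd hratio (by linarith)
end

section
/- Let N be a positive integer and d_N = 1/cos(π/(4N)). Then π/(2N) = 2·arccos(1/d_N), and moreover arccos(2d_N²/(d_N⁴+1)) ≤ π/(2N). -/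
/-- With `d_N = 1/cos(π/(4N))`, one has `π/(2N) = 2·arccos(1/d_N)` and
`arccos(2d_N²/(d_N⁴+1)) ≤ π/(2N)`. -/
theorem stmt12 (N : ℕ) (hN : 1 ≤ N) (d : ℝ)
    (hd : d = 1 / Real.cos (Real.pi / (4 * N))) :
    Real.pi / (2 * N) = 2 * Real.arccos (1 / d) ∧
      Real.arccos (2 * d ^ 2 / (d ^ 4 + 1)) ≤ Real.pi / (2 * N) := by
  have hNr : (1 : ℝ) ≤ N := by exact_mod_cast hN
  have hN0 : (0 : ℝ) < N := by linarith
  set θ : ℝ := Real.pi / (4 * N) with hθ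
  have hpi := Real.pi_pos
  have hθ0 : 0 < θ := by positivity
  have hθlt : θ < Real.pi / 2 := by
    rw [hθ, div_lt_div_iff₀ (by positivity) (by norm_num)]
    nlinarith
  have hc : 0 < Real.cos θ := Real.cos_pos_of_mem_Ioo ⟨by linarith, hθlt⟩
  have hc1 : Real.cos θ ≤ 1 := Real.cos_le_one θ
  have hdinv : 1 / d = Real.cos θ := by
    rw [hd, one_div_one_div]
  have harc : Real.arccos (1 / d) = θ := by
    rw [hdinv, Real.arccos_cos (le_of_lt hθ0) (by linarith)]
  have h1 : Real.pi / (2 * N) = 2 * θ := by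
    rw [hθ]; field_simp; ring
  refine ⟨by rw [h1, harc], ?_⟩
  rw [h1]
  set c := Real.cos θ
  have hd' : d = 1 / c := hd
  have ha : 2 * d ^ 2 / (d ^ 4 + 1) = 2 * c ^ 2 / (1 + c ^ 4) := by
    rw [hd']
    field_simp
  have h2θ : 2 * θ = Real.arccos (Real.cos (2 * θ)) := by
    rw [Real.arccos_cos (by linarith) (by linarith)]
  rw [ha, h2θ]
  unfold Real.arccos
  have : Real.cos (2 * θ) ≤ 2 * c ^ 2 / (1 + c ^ 4) := by
    rw [Real.cos_two_mul θ]
    rw [le_div_iff₀ (by nlinarith)]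
    show (2 * c ^ 2 - 1) * (1 + c ^ 4) ≤ 2 * c ^ 2
    nlinarith [mul_nonneg (by nlinarith : (0:ℝ) ≤ 1 - c ^ 2) (by positivity : (0:ℝ) ≤ 2 * c ^ 4 + c ^ 2 + 1)]
  have := Real.monotone_arcsin this
  linarith
end
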